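/- Let f be a normal ordinal function and let g be any weak hyperation of f such that g(ω^α) equals the α-th Veblen function f_α based on f, for every ordinal α. Then g is the minimal weak hyperation of f; in particular, any two weak hyperations of f with this property coincide. -/

import Mathlib

open Ordinal

universe u v

/-- The Mathlib (Dec 2024) definition of `Ordinal.IsNormal`, removed since. -/
def Ordinal.IsNormal (f : Ordinal.{u} → Ordinal.{v}) : Prop :=
  (∀ o, f o < f (Order.succ o)) ∧ ∀ o, Order.IsSuccLimit o → ∀ a, f o ≤ a ↔ ∀ b < o, f b ≤ a

/-- `g` is a weak hyperation of the normal function `f`: a family of normal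
functions with `g 0 = id`, `g 1 = f`, and `g (ξ + ζ) = g ξ ∘ g ζ`. -/
def IsWeakHyperation (f : Ordinal → Ordinal) (g : Ordinal → Ordinal → Ordinal) : Prop :=
  (∀ ξ : Ordinal, Ordinal.IsNormal (g ξ)) ∧
  g 0 = id ∧ g 1 = f ∧ ∀ ξ ζ : Ordinal, g (ξ + ζ) = g ξ ∘ g ζ

/-- `g` is the hyperation of `f`: the pointwise minimal weak hyperation of `f`. -/
def IsHyperation (f : Ordinal → Ordinal) (g : Ordinal → Ordinal → Ordinal) : Prop :=
  IsWeakHyperation f g ∧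
  ∀ h : Ordinal → Ordinal → Ordinal, IsWeakHyperation f h → ∀ ξ ζ : Ordinal, g ξ ζ ≤ h ξ ζ

/-- `V` is the Veblen progression based on `f`: `V 0 = f`, `V (α+1)` is the
derivative of `V α` (the function enumerating the fixed points of `V α`), and
for limit `λ`, `V λ` enumerates the common fixed points of all `V α`, `α < λ`. -/
def IsVeblenProgression (f : Ordinal → Ordinal) (V : Ordinal → Ordinal → Ordinal) : Prop :=
  V 0 = f ∧
  (∀ α : Ordinal, V (α + 1) = enumOrd {x | V α x = x}) ∧
  (∀ l : Ordinal, Order.IsSuccLimit l → V l = enumOrd {x | ∀ α < l, V α x = x})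

theorem Ordinal.IsNormal.strictMono {f : Ordinal.{u} → Ordinal.{v}} (H : Ordinal.IsNormal f) :
    StrictMono f := by
  intro a b hab
  induction b using Ordinal.limitRecOn with
  | zero => exact (not_lt_zero hab).elim
  | add_one b IH =>
    have hab' : a ≤ b := Order.lt_succ_iff.1 (by rwa [← Ordinal.add_one_eq_succ])
    rw [Ordinal.add_one_eq_succ]
    rcases hab'.lt_or_eq with h | rfl
    · exact (IH h).trans (H.1 b)
    · exact H.1 a
  | limit b hb IH =>
    exact (H.1 a).trans_le (((H.2 b hb (f b)).1 le_rfl) _ (hb.succ_lt hab))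

theorem Ordinal.IsNormal.le_apply {f : Ordinal.{u} → Ordinal.{u}} (H : Ordinal.IsNormal f)
    {a : Ordinal.{u}} : a ≤ f a :=
  H.strictMono.le_apply

/-- `enumOrd` is pointwise minimal among strictly monotone functions into `s`. -/
lemma enumOrd_le_aux {s : Set Ordinal} {φ : Ordinal → Ordinal} (hφ : StrictMono φ)
    (hφs : ∀ x, φ x ∈ s) : ∀ o, enumOrd s o ≤ φ o := by
  intro o
  induction o using Ordinal.induction with
  | h o IH =>
    exact enumOrd_le_of_forall_lt (hφs o) fun b hb => (IH b hb).trans_lt (hφ hb)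

/-- The key pointwise bound: any weak hyperation `h` of `f` dominates the Veblen
progression at `ω ^ α`. -/
lemma veblen_le_aux (f : Ordinal → Ordinal)
    (g : Ordinal → Ordinal → Ordinal) (hg : IsWeakHyperation f g)
    (V : Ordinal → Ordinal → Ordinal) (hV : IsVeblenProgression f V)
    (hgV : ∀ α : Ordinal, g (ω ^ α) = V α)
    (h : Ordinal → Ordinal → Ordinal) (hh : IsWeakHyperation f h) :
    ∀ α ζ : Ordinal, V α ζ ≤ h (ω ^ α) ζ := by
  intro α
  induction α using Ordinal.limitRecOn with
  | zero =>
    intro ζ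
    rw [hV.1, opow_zero, hh.2.2.1]
  | add_one α IH =>
    intro ζ
    rw [hV.2.1]
    have habs : (ω : Ordinal) ^ α + ω ^ (α + 1) = ω ^ (α + 1) :=
      add_absorp ((opow_lt_opow_iff_right one_lt_omega0).2 (lt_add_one α)) le_rfl
    have hfix : ∀ x, h (ω ^ (α + 1)) x ∈ {x | V α x = x} := by
      intro x
      have h1 : h (ω ^ α) (h (ω ^ (α + 1)) x) = h (ω ^ (α + 1)) x := by
        conv_rhs => rw [← habs, hh.2.2.2]
        rfl
      refine le_antisymm ((IH _).trans_eq h1) ?_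
      rw [← hgV α]; exact (hg.1 _).le_apply
    exact enumOrd_le_aux (hh.1 _).strictMono hfix ζ
  | limit l hl IH =>
    intro ζ
    rw [hV.2.2 l hl]
    have hfix : ∀ x, h (ω ^ l) x ∈ {x | ∀ α < l, V α x = x} := by
      intro x α hαl
      have habs : (ω : Ordinal) ^ α + ω ^ l = ω ^ l :=
        add_absorp ((opow_lt_opow_iff_right one_lt_omega0).2 hαl) le_rfl
      have h1 : h (ω ^ α) (h (ω ^ l) x) = h (ω ^ l) x := by
        conv_rhs => rw [← habs, hh.2.2.2]
        rfl
      refine le_antisymm ((IH α hαl _).trans_eq h1) ?_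
      rw [← hgV α]; exact (hg.1 _).le_apply
    exact enumOrd_le_aux (hh.1 _).strictMono hfix ζ

lemma min_aux (f : Ordinal → Ordinal)
    (g : Ordinal → Ordinal → Ordinal) (hg : IsWeakHyperation f g)
    (V : Ordinal → Ordinal → Ordinal) (hV : IsVeblenProgression f V)
    (hgV : ∀ α : Ordinal, g (ω ^ α) = V α)
    (h : Ordinal → Ordinal → Ordinal) (hh : IsWeakHyperation f h) :
    ∀ ξ ζ : Ordinal, g ξ ζ ≤ h ξ ζ := by
  intro ξ
  induction ξ using Ordinal.induction with
  | h ξ IH =>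
    rcases eq_or_ne ξ 0 with rfl | hξ0
    · intro ζ; rw [hg.2.1, hh.2.1]
    intro ζ
    set e := log ω ξ with he
    have hω : (ω : Ordinal) ^ e ≠ 0 := (opow_pos e omega0_pos).ne'
    have hmod : ξ % ω ^ e < ω ^ e := mod_lt ξ hω
    have hle : (ω : Ordinal) ^ e ≤ ξ := opow_log_le_self ω hξ0
    have hrlt : ξ % ω ^ e < ξ := hmod.trans_le hle
    have hdivlt : ξ / ω ^ e < ω := by
      rw [div_lt hω, ← opow_succ]
      exact lt_opow_succ_log_self one_lt_omega0 ξ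
    obtain ⟨n, hn⟩ := lt_omega0.1 hdivlt
    have hpow : ∀ ζ, g (ω ^ e) ζ ≤ h (ω ^ e) ζ := by
      intro ζ; rw [hgV]
      exact veblen_le_aux f g hg V hV hgV h hh e ζ
    have hmuln : ∀ (m : ℕ) (ζ : Ordinal), g (ω ^ e * m) ζ ≤ h (ω ^ e * m) ζ := by
      intro m
      induction m with
      | zero => intro ζ; simp [hg.2.1, hh.2.1]
      | succ m IHm =>
        intro ζ
        have hms : (ω : Ordinal) ^ e * (m + 1 : ℕ) = ω ^ e * m + ω ^ e := by
          push_cast; rw [mul_add, mul_one]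
        rw [hms, hg.2.2.2, hh.2.2.2, Function.comp_apply, Function.comp_apply]
        exact (IHm _).trans ((hh.1 _).strictMono.monotone (hpow ζ))
    have hξeq : (ω : Ordinal) ^ e * n + ξ % ω ^ e = ξ := by
      rw [← hn]; exact div_add_mod ξ (ω ^ e)
    have hgeq : g ξ ζ = g (ω ^ e * n) (g (ξ % ω ^ e) ζ) := by
      have := congrFun (hg.2.2.2 (ω ^ e * n) (ξ % ω ^ e)) ζ
      rw [hξeq] at this
      exact this
    have hheq : h (ω ^ e * n) (h (ξ % ω ^ e) ζ) = h ξ ζ := by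
      have := congrFun (hh.2.2.2 (ω ^ e * n) (ξ % ω ^ e)) ζ
      rw [hξeq] at this
      exact this.symm
    calc g ξ ζ = g (ω ^ e * n) (g (ξ % ω ^ e) ζ) := hgeq
      _ ≤ h (ω ^ e * n) (g (ξ % ω ^ e) ζ) := hmuln n _
      _ ≤ h (ω ^ e * n) (h (ξ % ω ^ e) ζ) :=
          (hh.1 _).strictMono.monotone (IH _ hrlt ζ)
      _ = h ξ ζ := hheq

/-- If `g` is a weak hyperation of the normal function `f` with `g (ω ^ α) = V α`
for all `α`, where `V` is the Veblen progression based on `f`, then `g` is the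
minimal weak hyperation of `f`; in particular any two weak hyperations of `f`
with this property coincide. -/
theorem stmt12 (f : Ordinal → Ordinal) (hf : Ordinal.IsNormal f)
    (g : Ordinal → Ordinal → Ordinal) (hg : IsWeakHyperation f g)
    (V : Ordinal → Ordinal → Ordinal) (hV : IsVeblenProgression f V)
    (hgV : ∀ α : Ordinal, g (ω ^ α) = V α) :
    IsHyperation f g ∧
      ∀ g' : Ordinal → Ordinal → Ordinal,
        IsWeakHyperation f g' → (∀ α : Ordinal, g' (ω ^ α) = V α) → g' = g := by
  have hmin : ∀ h : Ordinal → Ordinal → Ordinal, IsWeakHyperation f h →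
      ∀ ξ ζ : Ordinal, g ξ ζ ≤ h ξ ζ := fun h hh => min_aux f g hg V hV hgV h hh
  refine ⟨⟨hg, hmin⟩, ?_⟩
  intro g' hg' hg'V
  funext ξ ζ
  exact le_antisymm (min_aux f g' hg' V hV hg'V g hg ξ ζ) (hmin g' hg' ξ ζ)
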